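/- From asymmetric basic local to basic local: Let σ be a finite relational signature. Every asymmetric basic local sentence is equivalent over the class of all σ-structures to a positive Boolean combination (built using only conjunction and disjunction) of basic local sentences. -/

import Mathlib

open FirstOrder FirstOrder.Language

universe u v w

namespace Gaifman

/-- Two elements are adjacent in the Gaifman graph of a structure: they are distinct and
occur together in some tuple belonging to some relation. -/
def Adj (L : FirstOrder.Language.{u, u}) (M : Type u) [L.Structure M] (a b : M) : Prop :=
  a ≠ b ∧ ∃ (n : ℕ) (R : L.Relations n) (t : Fin n → M),
    Structure.RelMap R t ∧ a ∈ Set.range t ∧ b ∈ Set.range t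

/-- `CloseLE L M r a b` holds iff the Gaifman distance from `a` to `b` is at most `r`. -/
def CloseLE (L : FirstOrder.Language.{u, u}) (M : Type u) [L.Structure M] :
    ℕ → M → M → Prop
  | 0, a, b => a = b
  | r + 1, a, b => CloseLE L M r a b ∨ ∃ c, CloseLE L M r a c ∧ Adj L M c b

lemma closeLE_self (L : FirstOrder.Language.{u, u}) (M : Type u) [L.Structure M] :
    ∀ (r : ℕ) (a : M), CloseLE L M r a a
  | 0, _ => rfl
  | r + 1, a => Or.inl (closeLE_self L M r a)

/-- The `r`-neighborhood of a tuple: all elements at Gaifman distance at most `r`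
from some component of the tuple. -/
def Ball (L : FirstOrder.Language.{u, u}) {M : Type u} [L.Structure M] {m : ℕ}
    (a : Fin m → M) (r : ℕ) : Set M :=
  {x | ∃ i, CloseLE L M r (a i) x}

lemma self_mem_ball (L : FirstOrder.Language.{u, u}) {M : Type u} [L.Structure M] {m : ℕ}
    (a : Fin m → M) (r : ℕ) (i : Fin m) :
    a i ∈ Ball L a r := ⟨i, closeLE_self L M r (a i)⟩

/-- The substructure induced on a subset of a structure over a relational language. -/
def inducedStructure (L : FirstOrder.Language.{u, u}) [L.IsRelational] {M : Type u}
    [L.Structure M] (s : Set M) : L.Structure s where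
  funMap {n} f _ := isEmptyElim f
  RelMap {n} R t := Structure.RelMap R fun i => (t i : M)

/-- A formula is `r`-local if its truth at a tuple only depends on the induced substructure on
the `r`-neighborhood of the tuple. -/
def IsLocal {L : FirstOrder.Language.{u, u}} [L.IsRelational] (r : ℕ) {m : ℕ}
    (φ : L.Formula (Fin m)) : Prop :=
  ∀ (M : Type u) [L.Structure M] (a : Fin m → M),
    φ.Realize a ↔
      (letI := inducedStructure L (Ball L a r)
       φ.Realize fun i => (⟨a i, self_mem_ball L a r i⟩ : Ball L a r))

/-- Quantifier rank of a (bounded) formula. -/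
def qr {L : FirstOrder.Language.{u, u}} {α : Type v} : ∀ {n : ℕ}, L.BoundedFormula α n → ℕ
  | _, .falsum => 0
  | _, .equal _ _ => 0
  | _, .rel _ _ => 0
  | _, .imp f g => max (qr f) (qr g)
  | _, .all f => qr f + 1

/-- The components of a tuple are at pairwise Gaifman distance greater than `s`. -/
def Far (L : FirstOrder.Language.{u, u}) (M : Type u) [L.Structure M] (s : ℕ) {m : ℕ}
    (a : Fin m → M) : Prop :=
  ∀ i j : Fin m, i ≠ j → ¬ CloseLE L M s (a i) (a j)

/-- `A ≼_{r,q,k} B` : every sentence `∃ x₁ … x_k, τ` with `τ` an `r`-local formula of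
quantifier rank at most `q` that holds in `A` also holds in `B`. -/
def LocLE (L : FirstOrder.Language.{u, u}) [L.IsRelational] (r q k : ℕ) (M N : Type u)
    [L.Structure M] [L.Structure N] : Prop :=
  ∀ τ : L.Formula (Fin k), IsLocal r τ → qr τ ≤ q →
    (∃ a : Fin k → M, τ.Realize a) → ∃ b : Fin k → N, τ.Realize b

/-- The preorder `≼_{r,q,k}` with radius and rank parameters in `ℕ ∪ {∞}`: the intersection
over all finite parameters below the given ones. -/
def LocLEE (L : FirstOrder.Language.{u, u}) [L.IsRelational] (r q : ℕ∞) (k : ℕ)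
    (M N : Type u) [L.Structure M] [L.Structure N] : Prop :=
  ∀ r' q' : ℕ, (r' : ℕ∞) ≤ r → (q' : ℕ∞) ≤ q → LocLE L r' q' k M N

/-- Local elementary embedding. -/
def IsLocalElemEmb (L : FirstOrder.Language.{u, u}) [L.IsRelational] {M N : Type u}
    [L.Structure M] [L.Structure N] (h : M → N) : Prop :=
  ∀ (k r : ℕ) (a : Fin k → M) (φ : L.Formula (Fin k)), IsLocal r φ →
    (φ.Realize a ↔ φ.Realize (h ∘ a))

/-- Disjoint union of two structures over a relational language. -/
def sumStructure (L : FirstOrder.Language.{u, u}) [L.IsRelational] (M N : Type u)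
    [L.Structure M] [L.Structure N] : L.Structure (M ⊕ N) where
  funMap {n} f _ := isEmptyElim f
  RelMap {n} R t :=
    (∃ tm : Fin n → M, t = Sum.inl ∘ tm ∧ Structure.RelMap R tm) ∨
    (∃ tn : Fin n → N, t = Sum.inr ∘ tn ∧ Structure.RelMap R tn)

/-- A bundled `L`-structure. -/
structure Struc (L : FirstOrder.Language.{u, u}) : Type (u + 1) where
  carrier : Type u
  str : L.Structure carrier

attribute [instance] Struc.str

/-- The `(q,r)`-local type of a tuple. -/
def localType (L : FirstOrder.Language.{u, u}) [L.IsRelational] (r q : ℕ) {M : Type u}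
    [L.Structure M] {m : ℕ} (a : Fin m → M) : Set (L.Formula (Fin m)) :=
  {τ | IsLocal r τ ∧ qr τ ≤ q ∧ τ.Realize a}

/-- The collection of `(q,r)`-local types of tuples of at most `k` elements. -/
def Specter (L : FirstOrder.Language.{u, u}) [L.IsRelational] (r q k : ℕ) (M : Type u)
    [L.Structure M] : Set (Σ m : ℕ, Set (L.Formula (Fin m))) :=
  {p | ∃ m, m ≤ k ∧ ∃ a : Fin m → M, p = ⟨m, localType L r q a⟩}

/-- The data of a basic local sentence
`∃ x₁ … x_k, (⋀_{i ≠ j} d(xᵢ,xⱼ) > 2r ∧ ⋀ᵢ ψ(xᵢ))`. -/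
structure BasicLocal (L : FirstOrder.Language.{u, u}) [L.IsRelational] where
  k : ℕ
  r : ℕ
  ψ : L.Formula (Fin 1)
  isLocal : IsLocal r ψ

/-- Truth of a basic local sentence in a structure. -/
def BasicLocal.Holds {L : FirstOrder.Language.{u, u}} [L.IsRelational] (b : BasicLocal L)
    (M : Type u) [L.Structure M] : Prop :=
  ∃ a : Fin b.k → M, Far L M (2 * b.r) a ∧ ∀ i, b.ψ.Realize fun _ => a i

/-- The data of an asymmetric basic local sentence
`∃ x₁ … x_k, (⋀_{i ≠ j} d(xᵢ,xⱼ) > 2r ∧ ⋀ᵢ ψᵢ(xᵢ))`. -/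
structure AsymBasicLocal (L : FirstOrder.Language.{u, u}) [L.IsRelational] where
  k : ℕ
  r : ℕ
  ψ : Fin k → L.Formula (Fin 1)
  isLocal : ∀ i, IsLocal r (ψ i)

/-- Truth of an asymmetric basic local sentence in a structure. -/
def AsymBasicLocal.Holds {L : FirstOrder.Language.{u, u}} [L.IsRelational]
    (d : AsymBasicLocal L) (M : Type u) [L.Structure M] : Prop :=
  ∃ a : Fin d.k → M, Far L M (2 * d.r) a ∧ ∀ i, (d.ψ i).Realize fun _ => a i

/-- Positive Boolean combinations (conjunction and disjunction only). -/
inductive PosBool (α : Type w) : Type w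
  | base : α → PosBool α
  | conj : PosBool α → PosBool α → PosBool α
  | disj : PosBool α → PosBool α → PosBool α

/-- Evaluation of a positive Boolean combination against a truth assignment. -/
def PosBool.Eval {α : Type w} (v : α → Prop) : PosBool α → Prop
  | .base a => v a
  | .conj p q => p.Eval v ∧ q.Eval v
  | .disj p q => p.Eval v ∨ q.Eval v

/-- `φ` is equivalent over the class `C` to an existential local sentence `∃ x⃗, τ(x⃗)`. -/
def EquivToExistLocal {L : FirstOrder.Language.{u, u}} [L.IsRelational]
    (C : Set (Struc L)) (φ : L.Sentence) : Prop :=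
  ∃ (k r : ℕ) (τ : L.Formula (Fin k)), IsLocal r τ ∧
    ∀ S ∈ C, (S.carrier ⊨ φ ↔ ∃ a : Fin k → S.carrier, τ.Realize a)

/-- `A ⊆ᵢ B` : `A` is isomorphic to an induced substructure of `B`. -/
def SubInd {L : FirstOrder.Language.{u, u}} (A B : Struc L) : Prop :=
  Nonempty (A.carrier ↪[L] B.carrier)

/-- A hereditary class: closed under induced substructures. -/
def Hereditary {L : FirstOrder.Language.{u, u}} (C : Set (Struc L)) : Prop :=
  ∀ B ∈ C, ∀ A : Struc L, SubInd A B → A ∈ C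

/-- `φ` is preserved under extensions over `C`. -/
def PreservedUnderExt {L : FirstOrder.Language.{u, u}} (C : Set (Struc L))
    (φ : L.Sentence) : Prop :=
  ∀ A ∈ C, ∀ B ∈ C, A.carrier ⊨ φ → SubInd A B → B.carrier ⊨ φ

/-- `C` is closed under disjoint unions with finite structures. -/
def ClosedUnderDisjointUnions {L : FirstOrder.Language.{u, u}} [L.IsRelational]
    (C : Set (Struc L)) : Prop :=
  ∀ A ∈ C, ∀ B : Struc L, Finite B.carrier →
    (⟨A.carrier ⊕ B.carrier, sumStructure L A.carrier B.carrier⟩ : Struc L) ∈ C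

/-- `Balls(C, r, k)` : the structures isomorphic to an `r`-neighborhood of a tuple of at most
`k` elements of a structure of `C`. -/
def BallsClass {L : FirstOrder.Language.{u, u}} [L.IsRelational] (C : Set (Struc L))
    (r k : ℕ) : Set (Struc L) :=
  {T | ∃ A ∈ C, ∃ m, m ≤ k ∧ ∃ a : Fin m → A.carrier,
    letI := inducedStructure L (Ball L a r)
    Nonempty (T.carrier ≃[L] ↥(Ball L a r))}

/-- A `⊆ᵢ`-minimal model of `φ` in `C`: a model in `C` no proper induced substructure of
which satisfies `φ`. -/
def IsMinimalModel {L : FirstOrder.Language.{u, u}} [L.IsRelational] (C : Set (Struc L))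
    (φ : L.Sentence) (A : Struc L) : Prop :=
  A ∈ C ∧ A.carrier ⊨ φ ∧
    ∀ s : Set A.carrier,
      (letI := inducedStructure L s
       (↥s) ⊨ φ) → s = Set.univ

/-- Preservation under extensions holds over the class `D`: every sentence preserved under
extensions over `D` is equivalent over `D` to an existential sentence. -/
def PresExtHolds {L : FirstOrder.Language.{u, u}} [L.IsRelational]
    (D : Set (Struc L)) : Prop :=
  ∀ φ : L.Sentence, PreservedUnderExt D φ →
    ∃ (n : ℕ) (θ : L.Formula (Fin n)), θ.IsQF ∧
      ∀ S ∈ D, (S.carrier ⊨ φ ↔ ∃ a : Fin n → S.carrier, θ.Realize a)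

end Gaifman
namespace Gaifman

section CloseLemmas

variable {L : FirstOrder.Language.{u, u}} {M : Type u} [L.Structure M]

lemma adj_symm {a b : M} (h : Adj L M a b) : Adj L M b a := by
  obtain ⟨hne, n, R, t, hR, ha, hb⟩ := h
  exact ⟨hne.symm, n, R, t, hR, hb, ha⟩

lemma closeLE_succ {s : ℕ} {a b : M} (h : CloseLE L M s a b) : CloseLE L M (s + 1) a b :=
  Or.inl h

lemma closeLE_mono {s t : ℕ} (hst : s ≤ t) {a b : M} (h : CloseLE L M s a b) :
    CloseLE L M t a b := by
  induction t, hst using Nat.le_induction with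
  | base => exact h
  | succ n hn ih => exact Or.inl ih

lemma closeLE_trans {s t : ℕ} {a b c : M} (h1 : CloseLE L M s a b)
    (h2 : CloseLE L M t b c) : CloseLE L M (s + t) a c := by
  induction t generalizing c with
  | zero => cases h2; exact h1
  | succ t ih =>
    rcases h2 with h2 | ⟨c', hc', hadj⟩
    · exact closeLE_mono (by omega) (ih h2)
    · exact Or.inr ⟨c', ih hc', hadj⟩

lemma closeLE_symm {s : ℕ} {a b : M} (h : CloseLE L M s a b) : CloseLE L M s b a := by
  induction s generalizing b with
  | zero => exact h.symm
  | succ s ih =>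
    rcases h with h | ⟨c, hc, hadj⟩
    · exact closeLE_mono (by omega) (ih h)
    · have h1 : CloseLE L M 1 b c := Or.inr ⟨b, rfl, adj_symm hadj⟩
      have := closeLE_trans h1 (ih hc)
      exact closeLE_mono (by omega) this

end CloseLemmas

section Net

variable {L : FirstOrder.Language.{u, u}} {M : Type u} [L.Structure M]

/-- Greedy net extraction: given points `x 0, …, x (k-1)` and a scale sequence `μ` with
partial sums `D`, there is a level `t`, a set `S` of "representatives" that are pairwise
`μ t`-separated, and an assignment `f` sending each index to a representative at distance
at most `D t`. -/
lemma net {k : ℕ} (hk : 0 < k) (x : Fin k → M) (μ D : ℕ → ℕ) (hD0 : D 0 = 0)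
    (hDs : ∀ t, D (t + 1) = D t + μ t) :
    ∃ (t : ℕ) (S : Finset (Fin k)) (f : Fin k → Fin k),
      t + S.card = k ∧ S.Nonempty ∧ (∀ i, f i ∈ S) ∧ (∀ i ∈ S, f i = i) ∧
      (∀ i, CloseLE L M (D t) (x (f i)) (x i)) ∧
      (∀ i ∈ S, ∀ j ∈ S, i ≠ j → ¬ CloseLE L M (μ t) (x i) (x j)) := by
  classical
  have main : ∀ (n t : ℕ) (S : Finset (Fin k)) (f : Fin k → Fin k),
      S.card = n → t + S.card = k → (∀ i, f i ∈ S) → (∀ i ∈ S, f i = i) →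
      (∀ i, CloseLE L M (D t) (x (f i)) (x i)) →
      ∃ (t' : ℕ) (S' : Finset (Fin k)) (f' : Fin k → Fin k),
        t' + S'.card = k ∧ S'.Nonempty ∧ (∀ i, f' i ∈ S') ∧ (∀ i ∈ S', f' i = i) ∧
        (∀ i, CloseLE L M (D t') (x (f' i)) (x i)) ∧
        (∀ i ∈ S', ∀ j ∈ S', i ≠ j → ¬ CloseLE L M (μ t') (x i) (x j)) := by
    intro n
    induction n using Nat.strong_induction_on with
    | _ n ih =>
      intro t S f hcard hsum hmem hfix hclose
      have hSne : S.Nonempty := ⟨f ⟨0, hk⟩, hmem _⟩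
      by_cases hsep : ∀ i ∈ S, ∀ j ∈ S, i ≠ j → ¬ CloseLE L M (μ t) (x i) (x j)
      · exact ⟨t, S, f, hsum, hSne, hmem, hfix, hclose, hsep⟩
      · push_neg at hsep
        obtain ⟨i, hi, j, hj, hij, hd⟩ := hsep
        set S' : Finset (Fin k) := S.erase j with hS'
        set f' : Fin k → Fin k := fun l => if f l = j then i else f l with hf'
        have hcard' : S'.card = n - 1 := by
          rw [hS', Finset.card_erase_of_mem hj, hcard]
        have hn1 : 1 ≤ n := by
          rw [← hcard]; exact Finset.card_pos.2 ⟨j, hj⟩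
        refine ih (n - 1) (by omega) (t + 1) S' f' hcard' (by omega) ?_ ?_ ?_
        · intro l
          by_cases h : f l = j
          · simp only [hf', h, if_pos rfl, hS']
            exact Finset.mem_erase.2 ⟨hij, hi⟩
          · simp only [hf', if_neg h, hS']
            exact Finset.mem_erase.2 ⟨h, hmem l⟩
        · intro l hl
          have hlj : l ≠ j := (Finset.mem_erase.1 hl).1
          have hlS : l ∈ S := (Finset.mem_erase.1 hl).2
          have : f l = l := hfix l hlS
          simp only [hf', this, if_neg hlj]
        · intro l
          by_cases h : f l = j
          · simp only [hf', h, if_pos rfl]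
            have h1 : CloseLE L M (μ t) (x i) (x j) := hd
            have h2 : CloseLE L M (D t) (x j) (x l) := by rw [← h]; exact hclose l
            have := closeLE_trans h1 h2
            rw [hDs t]
            exact closeLE_mono (by omega) this
          · simp only [hf', if_neg h]
            exact closeLE_mono (by rw [hDs t]; omega) (hclose l)
  have := main k 0 Finset.univ id (by simp) (by simp) (fun i => Finset.mem_univ i)
    (fun i _ => rfl) (fun i => by rw [hD0]; exact closeLE_self L M 0 (x i))
  exact this

end Net

end Gaifman

namespace Gaifman

section Cover

variable {L : FirstOrder.Language.{u, u}} {M : Type u} [L.Structure M] {ι : Type v}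

/-- A transversal of the family `F` on the index set `C`, pairwise `σ`-separated. -/
def Trans (L : FirstOrder.Language.{u, u}) (M : Type u) [L.Structure M]
    (F : ι → Set M) (C : Finset ι) (σ : ℕ) : Prop :=
  ∃ z : ι → M, (∀ i ∈ C, z i ∈ F i) ∧
    ∀ i ∈ C, ∀ j ∈ C, i ≠ j → ¬ CloseLE L M σ (z i) (z j)

/-- Gauge function bounding the radius loss in the covering lemma. -/
def gauge (n : ℕ) : ℕ := 9 ^ n * 10 ^ (n * n)

lemma one_le_gauge (n : ℕ) : 1 ≤ gauge n :=
  Nat.one_le_iff_ne_zero.2 (Nat.mul_ne_zero (pow_ne_zero _ (by omega)) (pow_ne_zero _ (by omega)))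

lemma gauge_mono {m n : ℕ} (h : m ≤ n) : gauge m ≤ gauge n :=
  Nat.mul_le_mul (Nat.pow_le_pow_right (by omega) h)
    (Nat.pow_le_pow_right (by omega) (Nat.mul_le_mul h h))

lemma nine_gauge_le {n : ℕ} (h : 1 ≤ n) : 9 * gauge (n - 1) ≤ gauge n := by
  have h1 : 9 * gauge (n-1) ≤ 9 * gauge n := by
    have := gauge_mono (Nat.sub_le n 1); omega
  calc 9 * gauge (n - 1) = 9 ^ ((n-1) + 1) * 10 ^ ((n-1) * (n-1)) := by
        rw [gauge, pow_succ]; ring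
    _ ≤ 9 ^ n * 10 ^ (n * n) := by
        refine Nat.mul_le_mul (Nat.pow_le_pow_right (by omega) (by omega))
          (Nat.pow_le_pow_right (by omega) (Nat.mul_le_mul (by omega) (by omega)))

lemma ten_pow_le_gauge {t n : ℕ} (h : t ≤ n * n) : 10 ^ t ≤ gauge n := by
  calc 10 ^ t ≤ 10 ^ (n * n) := Nat.pow_le_pow_right (by omega) h
    _ ≤ 9 ^ n * 10 ^ (n * n) := Nat.le_mul_of_pos_left _ (by positivity)

/-- **Covering lemma**: if the family `F` has no `σ`-separated transversal on `C`, then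
for some nonempty `𝒮 ⊆ C`, the union of the `F i` for `i ∈ 𝒮` is covered by fewer than
`𝒮.card` balls of a radius at most `gauge C.card * σ`. -/
lemma cover_of_not_trans [Nonempty M] (F : ι → Set M) :
    ∀ (n : ℕ) (C : Finset ι) (σ : ℕ), C.card = n → ¬ Trans L M F C σ →
    ∃ 𝒮 : Finset ι, 𝒮 ⊆ C ∧ 𝒮.Nonempty ∧ ∃ (s : ℕ) (W : Finset M),
      s ≤ gauge n * σ ∧ W.card + 1 ≤ 𝒮.card ∧
      ∀ i ∈ 𝒮, ∀ x ∈ F i, ∃ w ∈ W, CloseLE L M s w x := by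
  classical
  intro n
  induction n using Nat.strong_induction_on with
  | _ n ih =>
    intro C σ hcard hntrans
    rcases Nat.eq_zero_or_pos n with hn0 | hn1
    · exfalso
      apply hntrans
      have hCe : C = ∅ := Finset.card_eq_zero.1 (hcard.trans hn0)
      refine ⟨fun _ => Classical.arbitrary M, ?_, ?_⟩ <;>
      · intro i hi
        rw [hCe] at hi
        simp at hi
    have hCne : C.Nonempty := Finset.card_pos.1 (by omega)
    by_cases ha : ∃ i ∈ C, ¬ Trans L M F (C.erase i) (9 * σ)
    · obtain ⟨i, hi, hnt⟩ := ha
      obtain ⟨𝒮, h𝒮sub, h𝒮ne, s, W, hs, hW, hcov⟩ :=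
        ih (n - 1) (by omega) (C.erase i) (9 * σ)
          (by rw [Finset.card_erase_of_mem hi, hcard]) hnt
      refine ⟨𝒮, h𝒮sub.trans (Finset.erase_subset _ _), h𝒮ne, s, W, ?_, hW, hcov⟩
      calc s ≤ gauge (n - 1) * (9 * σ) := hs
        _ = 9 * gauge (n - 1) * σ := by ring
        _ ≤ gauge n * σ := Nat.mul_le_mul_right σ (nine_gauge_le hn1)
    · push_neg at ha
      -- every `C.erase i` has a `9σ`-separated transversal `V i`
      have ha2 : ∀ i : ι, ∃ z : ι → M, i ∈ C →
          ((∀ j ∈ C.erase i, z j ∈ F j) ∧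
           ∀ j ∈ C.erase i, ∀ j' ∈ C.erase i, j ≠ j' → ¬ CloseLE L M (9 * σ) (z j) (z j')) := by
        intro i
        by_cases hi : i ∈ C
        · obtain ⟨z, hz1, hz2⟩ := ha i hi
          exact ⟨z, fun _ => ⟨hz1, hz2⟩⟩
        · exact ⟨fun _ => Classical.arbitrary M, fun h => absurd h hi⟩
      choose V hV using ha2
      set 𝒱 : Finset M := C.biUnion (fun i => (C.erase i).image (V i)) with h𝒱
      -- every point of every `F i`, `i ∈ C`, is `σ`-close to a point of `𝒱`
      have b1 : ∀ i ∈ C, ∀ x ∈ F i, ∃ v ∈ 𝒱, CloseLE L M σ v x := by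
        intro i hi x hx
        by_contra hfar
        push_neg at hfar
        apply hntrans
        refine ⟨Function.update (V i) i x, ?_, ?_⟩
        · intro j hj
          rcases eq_or_ne j i with rfl | hne
          · rwa [Function.update_self]
          · rw [Function.update_of_ne hne]
            exact (hV i hi).1 j (Finset.mem_erase.2 ⟨hne, hj⟩)
        · intro j hj j' hj' hjj'
          have hVmem : ∀ l ∈ C.erase i, V i l ∈ 𝒱 := by
            intro l hl
            exact Finset.mem_biUnion.2 ⟨i, hi, Finset.mem_image.2 ⟨l, hl, rfl⟩⟩
          rcases eq_or_ne j i with rfl | hne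
          · rw [Function.update_self, Function.update_of_ne hjj'.symm]
            intro hcl
            exact hfar _ (hVmem j' (Finset.mem_erase.2 ⟨hjj'.symm, hj'⟩)) (closeLE_symm hcl)
          · rcases eq_or_ne j' i with rfl | hne'
            · rw [Function.update_self, Function.update_of_ne hne]
              intro hcl
              exact hfar _ (hVmem j (Finset.mem_erase.2 ⟨hne, hj⟩)) hcl
            · rw [Function.update_of_ne hne, Function.update_of_ne hne']
              intro hcl
              exact (hV i hi).2 j (Finset.mem_erase.2 ⟨hne, hj⟩) j'
                (Finset.mem_erase.2 ⟨hne', hj'⟩) hjj' (closeLE_mono (by omega) hcl)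
      by_cases h𝒱e : 𝒱 = ∅
      · obtain ⟨i0, hi0⟩ := hCne
        refine ⟨{i0}, Finset.singleton_subset_iff.2 hi0, Finset.singleton_nonempty i0,
          σ, ∅, Nat.le_mul_of_pos_left σ (one_le_gauge n), by simp, ?_⟩
        intro i hi x hx
        rw [Finset.mem_singleton] at hi
        subst hi
        obtain ⟨v, hv, _⟩ := b1 _ hi0 x hx
        rw [h𝒱e] at hv
        simp at hv
      -- extract a net from `𝒱`
      have h𝒱card : 0 < 𝒱.card := Finset.card_pos.2 (Finset.nonempty_of_ne_empty h𝒱e)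
      set nV := 𝒱.card with hnV
      set xV : Fin nV → M := fun m => (𝒱.equivFin.symm m : M) with hxV
      obtain ⟨t, S, f, htS, hSne, hfmem, hffix, hfclose, hfsep⟩ :=
        net (L := L) (M := M) h𝒱card xV (fun u => 9 * 10 ^ u * σ) (fun u => (10 ^ u - 1) * σ)
          (by norm_num)
          (by
            intro u
            show (10 ^ (u + 1) - 1) * σ = (10 ^ u - 1) * σ + 9 * 10 ^ u * σ
            have h1 : 1 ≤ 10 ^ u := Nat.one_le_pow _ _ (by omega)
            have h2 : 10 ^ (u + 1) - 1 = (10 ^ u - 1) + 9 * 10 ^ u := by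
              rw [pow_succ]; omega
            rw [h2, add_mul])
      set s : ℕ := (10 ^ t - 1) * σ + σ with hsdef
      have hs10 : s = 10 ^ t * σ := by
        have h1 : 1 ≤ 10 ^ t := Nat.one_le_pow _ _ (by omega)
        have h3 : σ ≤ 10 ^ t * σ := Nat.le_mul_of_pos_left σ (by positivity)
        rw [hsdef, Nat.sub_mul, one_mul]
        omega
      set WM : Finset M := S.image xV with hWM
      set touch : ι → Finset M := fun i =>
        WM.filter (fun w => ∃ x ∈ F i, CloseLE L M s w x) with htouch
      -- every point of `F i` is `s`-close to a point of `touch i`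
      have b2 : ∀ i ∈ C, ∀ x ∈ F i, ∃ w ∈ touch i, CloseLE L M s w x := by
        intro i hi x hx
        obtain ⟨v, hv, hvx⟩ := b1 i hi x hx
        set m : Fin nV := 𝒱.equivFin ⟨v, hv⟩ with hm
        have hxm : xV m = v := by
          simp only [hxV, hm, Equiv.symm_apply_apply]
        have h1 : CloseLE L M ((10 ^ t - 1) * σ) (xV (f m)) (xV m) := hfclose m
        have h2 : CloseLE L M s (xV (f m)) x := by
          rw [hsdef]
          exact closeLE_trans h1 (by rwa [hxm])
        refine ⟨xV (f m), ?_, h2⟩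
        rw [htouch, Finset.mem_filter]
        exact ⟨Finset.mem_image.2 ⟨f m, hfmem m, rfl⟩, x, hx, h2⟩
      by_cases hall : ∀ s' : Finset {i // i ∈ C}, s'.card ≤ (s'.biUnion (fun i => touch i.1)).card
      · -- Hall's condition holds: build a transversal, contradiction
        exfalso
        obtain ⟨g, hginj, hgmem⟩ :=
          (Finset.all_card_le_biUnion_card_iff_exists_injective (fun i : {i // i ∈ C} => touch i.1)).1 hall
        have hg2 : ∀ i : {i // i ∈ C}, ∃ x ∈ F i.1, CloseLE L M s (g i) x := by
          intro i
          have := hgmem i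
          rw [htouch, Finset.mem_filter] at this
          exact this.2
        choose zc hzc1 hzc2 using hg2
        apply hntrans
        refine ⟨fun i => if h : i ∈ C then zc ⟨i, h⟩ else Classical.arbitrary M, ?_, ?_⟩
        · intro i hi
          beta_reduce
          rw [dif_pos hi]
          exact hzc1 ⟨i, hi⟩
        · intro i hi j hj hij
          beta_reduce
          rw [dif_pos hi, dif_pos hj]
          intro hcl
          -- compose distances: g ⟨i⟩ — zc ⟨i⟩ — zc ⟨j⟩ — g ⟨j⟩
          have c1 : CloseLE L M (s + (σ + s)) (g ⟨i, hi⟩) (g ⟨j, hj⟩) :=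
            closeLE_trans (hzc2 ⟨i, hi⟩)
              (closeLE_trans hcl (closeLE_symm (hzc2 ⟨j, hj⟩)))
          have hgne : g ⟨i, hi⟩ ≠ g ⟨j, hj⟩ := fun h =>
            hij (congrArg Subtype.val (hginj h))
          -- both are in WM: get their indices in S
          have hgi := hgmem ⟨i, hi⟩
          have hgj := hgmem ⟨j, hj⟩
          rw [htouch, Finset.mem_filter, hWM] at hgi hgj
          obtain ⟨mi, hmi, hmieq⟩ := Finset.mem_image.1 hgi.1
          obtain ⟨mj, hmj, hmjeq⟩ := Finset.mem_image.1 hgj.1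
          have hmne : mi ≠ mj := by
            rintro rfl
            exact hgne (hmieq.symm.trans hmjeq)
          apply hfsep mi hmi mj hmj hmne
          have hle : s + (σ + s) ≤ 9 * 10 ^ t * σ := by
            rw [hs10]
            have h1 : 1 ≤ 10 ^ t := Nat.one_le_pow _ _ (by omega)
            nlinarith
          rw [hmieq, hmjeq]
          exact closeLE_mono hle c1
      · -- Hall's condition fails: extract a deficient set
        push_neg at hall
        obtain ⟨s', hs'⟩ := hall
        set 𝒮 : Finset ι := s'.image Subtype.val with h𝒮
        set W : Finset M := s'.biUnion (fun i => touch i.1) with hW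
        have hcard𝒮 : 𝒮.card = s'.card :=
          Finset.card_image_of_injective s' Subtype.val_injective
        refine ⟨𝒮, ?_, ?_, s, W, ?_, by omega, ?_⟩
        · intro i hi
          obtain ⟨⟨i', hi'⟩, _, rfl⟩ := Finset.mem_image.1 hi
          exact hi'
        · rw [← Finset.card_pos, hcard𝒮]
          omega
        · rw [hs10]
          have ht : t ≤ n * n := by
            have h1 : 1 ≤ S.card := Finset.card_pos.2 hSne
            have h2 : nV ≤ n * n := by
              calc nV = 𝒱.card := rfl
                _ ≤ ∑ i ∈ C, ((C.erase i).image (V i)).card := Finset.card_biUnion_le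
                _ ≤ ∑ i ∈ C, n := by
                    refine Finset.sum_le_sum ?_
                    intro i hi
                    calc ((C.erase i).image (V i)).card ≤ (C.erase i).card :=
                          Finset.card_image_le
                      _ ≤ C.card := Finset.card_le_card (Finset.erase_subset _ _)
                      _ = n := hcard
                _ = n * n := by rw [Finset.sum_const, hcard, smul_eq_mul]
            omega
          exact Nat.mul_le_mul_right σ (ten_pow_le_gauge ht)
        · intro i hi x hx
          obtain ⟨⟨i', hiC⟩, hi's, rfl⟩ := Finset.mem_image.1 hi
          obtain ⟨w, hw, hwx⟩ := b2 i' hiC x hx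
          exact ⟨w, Finset.mem_biUnion.2 ⟨⟨i', hiC⟩, hi's, hw⟩, hwx⟩

end Cover

end Gaifman

namespace Gaifman

section LossyHall

variable {L : FirstOrder.Language.{u, u}} {M : Type u} [L.Structure M] {ι : Type v}

/-- **Lossy Hall lemma.** If for every nonempty `𝒮 ⊆ C` and every rung `l ≤ Λ` of a
geometric ladder there are `𝒮.card` points of `⋃ i ∈ 𝒮, F i` that are pairwise
`3 ^ l * σ`-separated, then `F` has a `σ`-separated transversal on `C`. -/
lemma trans_of_counts (F : ι → Set M) (C : Finset ι) (σ Λ : ℕ) (hC : C.Nonempty)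
    (hΛ : 2 * (gauge C.card * σ) ≤ 3 ^ Λ * σ)
    (hcount : ∀ 𝒮 ⊆ C, 𝒮.Nonempty → ∀ l ≤ Λ, ∃ y : Fin 𝒮.card → M,
      (∀ m, ∃ i ∈ 𝒮, y m ∈ F i) ∧
      ∀ m m', m ≠ m' → ¬ CloseLE L M (3 ^ l * σ) (y m) (y m')) :
    Trans L M F C σ := by
  classical
  obtain ⟨i0, hi0⟩ := hC
  have hM : Nonempty M := by
    obtain ⟨y, -, -⟩ := hcount {i0} (Finset.singleton_subset_iff.2 hi0)
      (Finset.singleton_nonempty i0) 0 (Nat.zero_le _)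
    exact ⟨y ⟨0, by simp⟩⟩
  by_contra hntrans
  obtain ⟨𝒮, h𝒮C, h𝒮ne, s, W, hs, hWcard, hcov⟩ :=
    cover_of_not_trans F C.card C σ rfl hntrans
  obtain ⟨y, hymem, hysep⟩ := hcount 𝒮 h𝒮C h𝒮ne Λ le_rfl
  -- map each point to a covering ball center
  have hmap : ∀ m : Fin 𝒮.card, ∃ w : {w // w ∈ W}, CloseLE L M s w.1 (y m) := by
    intro m
    obtain ⟨i, hi, hyi⟩ := hymem m
    obtain ⟨w, hw, hwy⟩ := hcov i hi (y m) hyi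
    exact ⟨⟨w, hw⟩, hwy⟩
  choose g hg using hmap
  have hcardlt : Fintype.card {w // w ∈ W} < Fintype.card (Fin 𝒮.card) := by
    rw [Fintype.card_coe, Fintype.card_fin]
    omega
  obtain ⟨m, m', hne, heq⟩ := Fintype.exists_ne_map_eq_of_card_lt g hcardlt
  apply hysep m m' hne
  have h1 : CloseLE L M (s + s) (y m) (y m') := by
    have := closeLE_trans (closeLE_symm (hg m)) (heq ▸ hg m')
    exact this
  refine closeLE_mono ?_ h1
  calc s + s = 2 * s := by ring
    _ ≤ 2 * (gauge C.card * σ) := by omega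
    _ ≤ 3 ^ Λ * σ := hΛ

end LossyHall

end Gaifman

namespace Gaifman

section Formulas

open FirstOrder.Language

variable (L : FirstOrder.Language.{u, u})

/-- Disjunction over a finset (port helper). -/
noncomputable def fsup {α β : Type*} (s : Finset β) (f : β → L.Formula α) : L.Formula α :=
  BoundedFormula.iSup (fun b : s => f b)

/-- Conjunction over a finset (port helper). -/
noncomputable def finf {α β : Type*} (s : Finset β) (f : β → L.Formula α) : L.Formula α :=
  BoundedFormula.iInf (fun b : s => f b)

/-- A first-order formula expressing adjacency in the Gaifman graph. -/
noncomputable def adjF [Finite (Σ n, L.Relations n)] : L.Formula (Fin 2) :=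
  letI : Fintype (Σ n, L.Relations n) := Fintype.ofFinite _
  (Term.equal (Term.var 0) (Term.var 1)).not ⊓
  fsup L (Finset.univ : Finset (Σ n, L.Relations n)) (fun p =>
    Formula.iExs (Fin p.1)
      ((p.2.formula (fun i => Term.var (Sum.inr i))) ⊓
       (fsup L (Finset.univ : Finset (Fin p.1)) (fun i =>
          Term.equal (Term.var (Sum.inr i)) (Term.var (Sum.inl 0)))) ⊓
       (fsup L (Finset.univ : Finset (Fin p.1)) (fun i =>
          Term.equal (Term.var (Sum.inr i)) (Term.var (Sum.inl 1))))))

variable {L}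

lemma realize_iSup_formula {α β : Type*} {M : Type u} [L.Structure M] (s : Finset β)
    (f : β → L.Formula α) (v : α → M) :
    Formula.Realize (fsup L s f) v ↔ ∃ b ∈ s, Formula.Realize (f b) v :=
  by
    simp only [fsup, Formula.Realize, BoundedFormula.realize_iSup]
    exact ⟨fun ⟨b, h⟩ => ⟨b.1, b.2, h⟩, fun ⟨b, hb, h⟩ => ⟨⟨b, hb⟩, h⟩⟩

lemma realize_iInf_formula {α β : Type*} {M : Type u} [L.Structure M] (s : Finset β)
    (f : β → L.Formula α) (v : α → M) :
    Formula.Realize (finf L s f) v ↔ ∀ b ∈ s, Formula.Realize (f b) v :=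
  by
    simp only [finf, Formula.Realize, BoundedFormula.realize_iInf]
    exact ⟨fun h b hb => h ⟨b, hb⟩, fun h b => h b.1 b.2⟩

lemma realize_adjF [Finite (Σ n, L.Relations n)] {M : Type u} [L.Structure M]
    (v : Fin 2 → M) : (adjF L).Realize v ↔ Adj L M (v 0) (v 1) := by
  classical
  letI : Fintype (Σ n, L.Relations n) := Fintype.ofFinite _
  rw [adjF]
  rw [Formula.realize_inf, Formula.realize_not, Formula.realize_equal]
  simp only [Term.realize_var]
  rw [realize_iSup_formula]
  constructor
  · rintro ⟨hne, p, -, hp⟩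
    rw [Formula.realize_iExs] at hp
    obtain ⟨w, hw⟩ := hp
    rw [Formula.realize_inf, Formula.realize_inf, Formula.realize_rel,
      realize_iSup_formula, realize_iSup_formula] at hw
    obtain ⟨⟨hR, i, -, hi⟩, j, -, hj⟩ := hw
    rw [Formula.realize_equal] at hi hj
    simp only [Term.realize_var, Sum.elim_inl, Sum.elim_inr] at hi hj hR
    exact ⟨hne, p.1, p.2, w, hR, ⟨i, hi⟩, ⟨j, hj⟩⟩
  · rintro ⟨hne, n, R, t, hR, ⟨i, hi⟩, ⟨j, hj⟩⟩
    refine ⟨hne, ⟨n, R⟩, Finset.mem_univ _, ?_⟩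
    rw [Formula.realize_iExs]
    refine ⟨t, ?_⟩
    rw [Formula.realize_inf, Formula.realize_inf, Formula.realize_rel,
      realize_iSup_formula, realize_iSup_formula]
    refine ⟨⟨?_, i, Finset.mem_univ _, ?_⟩, j, Finset.mem_univ _, ?_⟩
    · simpa using hR
    · rw [Formula.realize_equal]; simpa using hi
    · rw [Formula.realize_equal]; simpa using hj

variable (L)

/-- A first-order formula expressing Gaifman distance at most `s`. -/
noncomputable def closeF [Finite (Σ n, L.Relations n)] : ℕ → L.Formula (Fin 2)
  | 0 => Term.equal (Term.var 0) (Term.var 1)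
  | (s+1) => closeF s ⊔ Formula.iExs (Fin 1)
      (((closeF s).relabel ![Sum.inl 0, Sum.inr 0]) ⊓
       ((adjF L).relabel ![Sum.inr 0, Sum.inl 1]))

variable {L}

lemma realize_closeF [Finite (Σ n, L.Relations n)] {M : Type u} [L.Structure M]
    (s : ℕ) (v : Fin 2 → M) : (closeF L s).Realize v ↔ CloseLE L M s (v 0) (v 1) := by
  induction s generalizing v with
  | zero =>
    rw [closeF, Formula.realize_equal]
    simp only [Term.realize_var]
    exact Iff.rfl
  | succ s ih =>
    rw [closeF, Formula.realize_sup, Formula.realize_iExs]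
    show _ ↔ (CloseLE L M s (v 0) (v 1) ∨ _)
    rw [ih]
    refine or_congr Iff.rfl ?_
    constructor
    · rintro ⟨w, hw⟩
      rw [Formula.realize_inf, Formula.realize_relabel, Formula.realize_relabel] at hw
      obtain ⟨h1, h2⟩ := hw
      rw [ih] at h1
      rw [realize_adjF] at h2
      simp only [Function.comp, Matrix.cons_val_zero, Matrix.cons_val_one, Matrix.head_cons,
        Sum.elim_inl, Sum.elim_inr] at h1 h2
      exact ⟨w 0, h1, h2⟩
    · rintro ⟨c, hc, hadj⟩
      refine ⟨fun _ => c, ?_⟩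
      rw [Formula.realize_inf, Formula.realize_relabel, Formula.realize_relabel, ih,
        realize_adjF]
      simp only [Function.comp, Matrix.cons_val_zero, Matrix.cons_val_one, Matrix.head_cons,
        Sum.elim_inl, Sum.elim_inr]
      exact ⟨hc, hadj⟩

end Formulas

end Gaifman

namespace Gaifman

section Pattern

open FirstOrder.Language

variable (L : FirstOrder.Language.{u, u}) [Finite (Σ n, L.Relations n)]

/-- Semantics of the pattern formula `patF`: there is a family of points `y i`, `i ∈ P`,
all within distance `Δ` of `x`, pairwise more than `2 * rr` apart, with `y i ⊨ ψ i`. -/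
def PatSem (k rr Δ : ℕ) (ψ : Fin k → L.Formula (Fin 1)) (P : Finset (Fin k))
    (M : Type u) [L.Structure M] (x : M) : Prop :=
  ∃ y : Fin k → M, ∀ i ∈ P, CloseLE L M Δ x (y i) ∧
    (∀ j ∈ P, j ≠ i → ¬ CloseLE L M (2 * rr) (y i) (y j)) ∧
    (ψ i).Realize (fun _ => y i)

/-- The pattern formula. -/
noncomputable def patF (k rr Δ : ℕ) (ψ : Fin k → L.Formula (Fin 1))
    (P : Finset (Fin k)) : L.Formula (Fin 1) :=
  Formula.iExs (Fin k)
    (finf L P (fun i =>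
      ((closeF L Δ).relabel ![Sum.inl 0, Sum.inr i]) ⊓
      (finf L (P.erase i) (fun j =>
        ((closeF L (2 * rr)).relabel ![Sum.inr i, Sum.inr j]).not)) ⊓
      ((ψ i).relabel (fun _ => Sum.inr i))))

variable {L}

lemma realize_patF {k rr Δ : ℕ} {ψ : Fin k → L.Formula (Fin 1)} {P : Finset (Fin k)}
    {M : Type u} [L.Structure M] (v : Fin 1 → M) :
    (patF L k rr Δ ψ P).Realize v ↔ PatSem L k rr Δ ψ P M (v 0) := by
  rw [patF, Formula.realize_iExs]
  refine exists_congr fun y => ?_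
  rw [realize_iInf_formula]
  refine forall_congr' fun i => ?_
  refine forall_congr' fun hi => ?_
  rw [Formula.realize_inf, Formula.realize_inf, Formula.realize_relabel, realize_closeF,
    realize_iInf_formula]
  simp only [Function.comp_def, Matrix.cons_val_zero, Matrix.cons_val_one, Matrix.head_cons,
    Sum.elim_inl, Sum.elim_inr]
  rw [and_assoc]
  refine and_congr Iff.rfl (and_congr ?_ ?_)
  · constructor
    · intro h j hj hne
      have := h j (Finset.mem_erase.2 ⟨hne, hj⟩)
      rw [Formula.realize_not, Formula.realize_relabel, realize_closeF] at this
      simpa using this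
    · intro h j hj
      rw [Finset.mem_erase] at hj
      rw [Formula.realize_not, Formula.realize_relabel, realize_closeF]
      simpa using h j hj.2 hj.1
  · rw [Formula.realize_relabel]
    exact Iff.rfl

end Pattern

section Induced

variable {L : FirstOrder.Language.{u, u}} [L.IsRelational] {M : Type u} [L.Structure M]

lemma adj_induced_to_amb {s : Set M} {u w : ↥s}
    (h : @Adj L ↥s (inducedStructure L s) u w) : Adj L M u.1 w.1 := by
  obtain ⟨hne, n, R, t, hR, ⟨i, hi⟩, ⟨j, hj⟩⟩ := h
  exact ⟨fun he => hne (Subtype.ext he), n, R, fun i => (t i).1, hR,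
    ⟨i, congrArg Subtype.val hi⟩, ⟨j, congrArg Subtype.val hj⟩⟩

lemma closeLE_induced_to_amb {s : Set M} {t : ℕ} {u w : ↥s}
    (h : @CloseLE L ↥s (inducedStructure L s) t u w) : CloseLE L M t u.1 w.1 := by
  induction t generalizing w with
  | zero => exact congrArg Subtype.val h
  | succ t ih =>
    rcases h with h | ⟨c, hc, hadj⟩
    · exact Or.inl (ih h)
    · exact Or.inr ⟨c.1, ih hc, adj_induced_to_amb hadj⟩

lemma closeLE_amb_to_induced {s : Set M} {x : M} {ρ : ℕ}
    (hs : ∀ z : M, z ∈ s ↔ CloseLE L M ρ x z) :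
    ∀ (ss tt : ℕ) (u w : M), CloseLE L M tt x u → tt + ss ≤ ρ →
      CloseLE L M ss u w →
      ∃ (hum : u ∈ s) (hwm : w ∈ s),
        @CloseLE L ↥s (inducedStructure L s) ss ⟨u, hum⟩ ⟨w, hwm⟩ := by
  intro ss
  induction ss with
  | zero =>
    intro tt u w hu hle hw
    have hw' : u = w := hw
    subst hw'
    exact ⟨(hs u).2 (closeLE_mono (by omega) hu), (hs u).2 (closeLE_mono (by omega) hu), rfl⟩
  | succ ss ih =>
    intro tt u w hu hle hw
    rcases hw with hw | ⟨c, hc, hadj⟩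
    · obtain ⟨hum, hwm, h⟩ := ih tt u w hu (by omega) hw
      exact ⟨hum, hwm, Or.inl h⟩
    · obtain ⟨hum, hcm, h⟩ := ih tt u c hu (by omega) hc
      have hxc : CloseLE L M (tt + ss) x c := closeLE_trans hu hc
      obtain ⟨hne, n, R, τ, hR, hcr, hwr⟩ := hadj
      have hmem : ∀ i, τ i ∈ s := by
        intro i
        rcases eq_or_ne (τ i) c with he | hne'
        · rw [he]; exact (hs c).2 (closeLE_mono (by omega) hxc)
        · have hadj' : Adj L M c (τ i) := ⟨hne'.symm, n, R, τ, hR, hcr, ⟨i, rfl⟩⟩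
          have : CloseLE L M (tt + ss + 1) x (τ i) := Or.inr ⟨c, hxc, hadj'⟩
          exact (hs _).2 (closeLE_mono (by omega) this)
      have hwm : w ∈ s := by obtain ⟨j, hj⟩ := hwr; rw [← hj]; exact hmem j
      refine ⟨hum, hwm, Or.inr ⟨⟨c, hcm⟩, h, ?_⟩⟩
      refine ⟨fun he => hne (congrArg Subtype.val he), n, R, fun i => ⟨τ i, hmem i⟩, hR, ?_, ?_⟩
      · obtain ⟨j, hj⟩ := hcr; exact ⟨j, Subtype.ext hj⟩
      · obtain ⟨j, hj⟩ := hwr; exact ⟨j, Subtype.ext hj⟩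

end Induced

end Gaifman

namespace Gaifman

section Locality

open FirstOrder.Language

variable {L : FirstOrder.Language.{u, u}} [L.IsRelational] [Finite (Σ n, L.Relations n)]
variable {M : Type u} [L.Structure M]

/-- A local formula transfers between the ambient structure and a ball-like induced
substructure around a point not too far from the center. -/
lemma realize_local_induced {rr : ℕ} {φ : L.Formula (Fin 1)} (hloc : IsLocal rr φ)
    {s : Set M} {x : M} {ρ : ℕ} (hs : ∀ z : M, z ∈ s ↔ CloseLE L M ρ x z)
    {Δ : ℕ} (hρ : Δ + rr ≤ ρ) {y : M} (hxy : CloseLE L M Δ x y) (hym : y ∈ s) :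
    φ.Realize (fun _ : Fin 1 => y) ↔
      (letI := inducedStructure L s
       φ.Realize (fun _ : Fin 1 => (⟨y, hym⟩ : ↥s))) := by
  letI inst_s : L.Structure ↥s := inducedStructure L s
  set ybar : ↥s := ⟨y, hym⟩ with hybar
  have hloc1 := hloc M (fun _ => y)
  have hloc2 := hloc ↥s (fun _ => ybar)
  rw [hloc1, hloc2]
  set T2 : Set M := Ball L (fun _ : Fin 1 => y) rr with hT2
  set T1 : Set ↥s := Ball L (fun _ : Fin 1 => ybar) rr with hT1
  letI inst1 : L.Structure ↥T1 := inducedStructure L T1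
  letI inst2 : L.Structure ↥T2 := inducedStructure L T2
  have fwdmem : ∀ z : ↥T1, (z.1.1 : M) ∈ T2 := by
    intro z
    obtain ⟨i, hi⟩ := z.2
    exact ⟨0, closeLE_induced_to_amb hi⟩
  have bwd : ∀ z : M, z ∈ T2 → ∃ (hzm : z ∈ s), (⟨z, hzm⟩ : ↥s) ∈ T1 := by
    intro z hz
    obtain ⟨i, hi⟩ := hz
    obtain ⟨hum, hwm, hcl⟩ := closeLE_amb_to_induced hs rr Δ y z hxy hρ hi
    exact ⟨hwm, ⟨0, hcl⟩⟩
  let e : ↥T1 ≃[L] ↥T2 :=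
    { toFun := fun z => ⟨z.1.1, fwdmem z⟩
      invFun := fun z => ⟨⟨z.1, (bwd z.1 z.2).choose⟩, (bwd z.1 z.2).choose_spec⟩
      left_inv := fun z => Subtype.ext (Subtype.ext rfl)
      right_inv := fun z => Subtype.ext rfl
      map_fun' := fun f => isEmptyElim f
      map_rel' := fun R v => Iff.rfl }
  have := StrongHomClass.realize_formula e (φ := φ)
    (v := fun i : Fin 1 => (⟨ybar, self_mem_ball L (fun _ : Fin 1 => ybar) rr i⟩ : ↥T1))
  rw [← this]
  have hfun : (e ∘ fun i : Fin 1 =>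
      (⟨ybar, self_mem_ball L (fun _ : Fin 1 => ybar) rr i⟩ : ↥T1)) =
      fun i : Fin 1 => (⟨y, self_mem_ball L (fun _ : Fin 1 => y) rr i⟩ : ↥T2) := by
    funext i
    exact Subtype.ext rfl
  rw [hfun]

end Locality

end Gaifman

namespace Gaifman

section PatLocal

open FirstOrder.Language

variable {L : FirstOrder.Language.{u, u}} [L.IsRelational] [Finite (Σ n, L.Relations n)]

omit [Finite ((n : ℕ) × L.Relations n)] in
lemma isLocal_bot (ρ : ℕ) : IsLocal (L := L) ρ (⊥ : L.Formula (Fin 1)) := by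
  intro M _ a
  simp [Formula.realize_bot]

omit [Finite ((n : ℕ) × L.Relations n)] in
lemma isLocal_iSup {β : Type*} (ρ : ℕ) (Q : Finset β) (f : β → L.Formula (Fin 1))
    (h : ∀ b ∈ Q, IsLocal ρ (f b)) : IsLocal ρ (fsup L Q f) := by
  intro M _ a
  rw [realize_iSup_formula]
  letI := inducedStructure L (Ball L a ρ)
  rw [realize_iSup_formula]
  constructor
  · rintro ⟨b, hb, hr⟩
    exact ⟨b, hb, (h b hb M a).1 hr⟩
  · rintro ⟨b, hb, hr⟩
    exact ⟨b, hb, (h b hb M a).2 hr⟩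

lemma isLocal_patF {k rr Δ : ℕ} {ψ : Fin k → L.Formula (Fin 1)}
    (hψ : ∀ i, IsLocal rr (ψ i)) (P : Finset (Fin k)) {ρ : ℕ}
    (hρ : Δ + 2 * rr + rr ≤ ρ) : IsLocal ρ (patF L k rr Δ ψ P) := by
  intro M _ a
  rw [realize_patF]
  letI := inducedStructure L (Ball L a ρ)
  rw [realize_patF]
  have hs : ∀ z : M, z ∈ Ball L a ρ ↔ CloseLE L M ρ (a 0) z := by
    intro z
    constructor
    · rintro ⟨i, hi⟩
      have hia : a i = a 0 := by rw [Subsingleton.elim i (0 : Fin 1)]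
      rwa [hia] at hi
    · intro h
      exact ⟨0, h⟩
  have hxm : a 0 ∈ Ball L a ρ := self_mem_ball L a ρ 0
  constructor
  · rintro ⟨y, hy⟩
    have hmem : ∀ i, i ∈ P → ∃ h : y i ∈ Ball L a ρ,
        @CloseLE L ↥(Ball L a ρ) (inducedStructure L (Ball L a ρ)) Δ ⟨a 0, hxm⟩ ⟨y i, h⟩ := by
      intro i hi
      obtain ⟨hum, hwm, hcl⟩ := closeLE_amb_to_induced hs Δ 0 (a 0) (y i)
        (closeLE_self L M 0 (a 0)) (by omega) (hy i hi).1
      exact ⟨hwm, hcl⟩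
    refine ⟨fun i => if h : i ∈ P then ⟨y i, (hmem i h).choose⟩ else ⟨a 0, hxm⟩,
      fun i hi => ⟨?_, ?_, ?_⟩⟩
    · beta_reduce
      rw [dif_pos hi]
      exact (hmem i hi).choose_spec
    · intro j hj hne
      beta_reduce
      rw [dif_pos hi, dif_pos hj]
      intro hcl
      exact (hy i hi).2.1 j hj hne (closeLE_induced_to_amb hcl)
    · beta_reduce
      rw [dif_pos hi]
      exact (realize_local_induced (hψ i) hs (by omega) (hy i hi).1
        (hmem i hi).choose).1 (hy i hi).2.2
  · rintro ⟨yb, hyb⟩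
    refine ⟨fun i => (yb i).1, fun i hi => ⟨?_, ?_, ?_⟩⟩
    · exact closeLE_induced_to_amb (hyb i hi).1
    · intro j hj hne hcl
      have hxyi : CloseLE L M Δ (a 0) (yb i).1 := closeLE_induced_to_amb (hyb i hi).1
      obtain ⟨hum, hwm, hcl'⟩ := closeLE_amb_to_induced hs (2 * rr) Δ (yb i).1 (yb j).1
        hxyi (by omega) hcl
      exact (hyb i hi).2.1 j hj hne hcl'
    · have hxyi : CloseLE L M Δ (a 0) (yb i).1 := closeLE_induced_to_amb (hyb i hi).1
      exact (realize_local_induced (hψ i) hs (by omega) hxyi (yb i).2).2 (hyb i hi).2.2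

end PatLocal

end Gaifman

namespace Gaifman

section Assembly

open FirstOrder.Language

/-- Scale sequence: diameters of clusters. -/
def DD (rr lam : ℕ) : ℕ → ℕ
  | 0 => 0
  | (t+1) => DD rr lam t + 2 * 3 ^ lam * (DD rr lam t + 3 * rr + 1)

/-- Scale sequence: separation of cluster representatives. -/
def mu (rr lam t : ℕ) : ℕ := 2 * 3 ^ lam * (DD rr lam t + 3 * rr + 1)

/-- Radii for the basic local sentences. -/
def rho (rr lam t l : ℕ) : ℕ := (DD rr lam t + 3 * rr + 1) * 3 ^ l

lemma rho_zero (rr lam t : ℕ) : rho rr lam t 0 = DD rr lam t + 3 * rr + 1 := by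
  simp [rho]

lemma two_rho_le_mu {rr lam t l : ℕ} (h : l ≤ lam) : 2 * rho rr lam t l ≤ mu rr lam t := by
  rw [rho, mu]
  have h1 : (3:ℕ) ^ l ≤ 3 ^ lam := Nat.pow_le_pow_right (by omega) h
  nlinarith

lemma loc_le_rho (rr lam t l : ℕ) : DD rr lam t + 2 * rr + rr ≤ rho rr lam t l := by
  rw [rho]
  have h1 : 1 ≤ (3:ℕ) ^ l := Nat.one_le_pow _ _ (by omega)
  nlinarith

lemma scale_eq (rr lam t l : ℕ) : 3 ^ l * (2 * rho rr lam t 0) = 2 * rho rr lam t l := by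
  rw [rho, rho]
  ring

lemma two_gauge_le {p k : ℕ} (h : p ≤ k) : 2 * gauge p ≤ 3 ^ (3 * k * k + 2 * k + 1) := by
  have h1 : gauge p ≤ gauge k := gauge_mono h
  have h2 : (9:ℕ) ^ k = 3 ^ (2 * k) := by
    rw [show (9:ℕ) = 3 ^ 2 by norm_num, ← pow_mul]
  have h3 : (10:ℕ) ^ (k * k) ≤ 3 ^ (3 * (k * k)) := by
    calc (10:ℕ) ^ (k * k) ≤ 27 ^ (k * k) := Nat.pow_le_pow_left (by norm_num) _
      _ = 3 ^ (3 * (k * k)) := by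
          rw [show (27:ℕ) = 3 ^ 3 by norm_num, ← pow_mul, Nat.mul_comm 3 (k*k), Nat.mul_comm (k*k) 3]
  have h4 : gauge k ≤ 3 ^ (2 * k) * 3 ^ (3 * (k * k)) := by
    rw [gauge, ← h2]
    exact Nat.mul_le_mul le_rfl h3
  have h5 : 3 ^ (2 * k) * 3 ^ (3 * (k * k)) = 3 ^ (3 * k * k + 2 * k) := by
    rw [← pow_add]
    ring_nf
  calc 2 * gauge p ≤ 2 * (3 ^ (3 * k * k + 2 * k)) := by
        rw [← h5]; omega
    _ ≤ 3 * 3 ^ (3 * k * k + 2 * k) := by omega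
    _ = 3 ^ (3 * k * k + 2 * k + 1) := by rw [pow_succ]; ring

/-- Disjunction of a list of positive Boolean combinations. -/
def listOr {α : Type w} (dflt : PosBool α) : List (PosBool α) → PosBool α
  | [] => dflt
  | p :: ps => p.disj (listOr dflt ps)

/-- Conjunction of a list of positive Boolean combinations. -/
def listAnd {α : Type w} (dflt : PosBool α) : List (PosBool α) → PosBool α
  | [] => dflt
  | p :: ps => p.conj (listAnd dflt ps)

lemma eval_listOr {α : Type w} (v : α → Prop) (dflt : PosBool α) (l : List (PosBool α)) :
    (listOr dflt l).Eval v ↔ (∃ p ∈ l, p.Eval v) ∨ dflt.Eval v := by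
  induction l with
  | nil => simp [listOr]
  | cons p ps ih =>
    simp only [listOr, PosBool.Eval, ih, List.mem_cons]
    constructor
    · rintro (h | (⟨q, hq, he⟩ | h))
      · exact Or.inl ⟨p, Or.inl rfl, h⟩
      · exact Or.inl ⟨q, Or.inr hq, he⟩
      · exact Or.inr h
    · rintro (⟨q, (rfl | hq), he⟩ | h)
      · exact Or.inl he
      · exact Or.inr (Or.inl ⟨q, hq, he⟩)
      · exact Or.inr (Or.inr h)

lemma eval_listAnd {α : Type w} (v : α → Prop) (dflt : PosBool α) (l : List (PosBool α)) :
    (listAnd dflt l).Eval v ↔ (∀ p ∈ l, p.Eval v) ∧ dflt.Eval v := by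
  induction l with
  | nil => simp [listAnd]
  | cons p ps ih =>
    simp only [listAnd, PosBool.Eval, ih, List.mem_cons]
    constructor
    · rintro ⟨hp, hps, hd⟩
      exact ⟨fun q hq => hq.elim (fun h => h ▸ hp) (hps q), hd⟩
    · rintro ⟨h, hd⟩
      exact ⟨h p (Or.inl rfl), fun q hq => h q (Or.inr hq), hd⟩

variable {L : FirstOrder.Language.{u, u}} [L.IsRelational]

/-- A basic local sentence that always holds. -/
noncomputable def btrue (L : FirstOrder.Language.{u, u}) [L.IsRelational] : BasicLocal L :=
  ⟨0, 0, ⊥, isLocal_bot 0⟩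

/-- A basic local sentence that never holds. -/
noncomputable def bfalse (L : FirstOrder.Language.{u, u}) [L.IsRelational] : BasicLocal L :=
  ⟨1, 0, ⊥, isLocal_bot 0⟩

lemma holds_btrue (M : Type u) [L.Structure M] : (btrue L).Holds M :=
  ⟨fun i => absurd i.isLt (by simp [btrue]), fun i => absurd i.isLt (by simp [btrue]),
   fun i => absurd i.isLt (by simp [btrue])⟩

lemma not_holds_bfalse (M : Type u) [L.Structure M] : ¬ (bfalse L).Holds M := by
  rintro ⟨a, -, h⟩
  simpa [bfalse, Formula.realize_bot] using h ⟨0, by simp [bfalse]⟩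

/-- The parts of the partition of `Fin k` induced by a labelling function `c`. -/
def labelParts {k : ℕ} (c : Fin k → Fin k) : Finset (Finset (Fin k)) :=
  Finset.univ.image (fun i => Finset.univ.filter (fun j => c j = c i))

lemma mem_labelParts_self {k : ℕ} (c : Fin k → Fin k) (i : Fin k) :
    Finset.univ.filter (fun j => c j = c i) ∈ labelParts c :=
  Finset.mem_image.2 ⟨i, Finset.mem_univ i, rfl⟩

lemma card_labelParts_le {k : ℕ} (c : Fin k → Fin k) : (labelParts c).card ≤ k := by
  calc (labelParts c).card ≤ (Finset.univ : Finset (Fin k)).card := Finset.card_image_le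
    _ = k := by simp

end Assembly

end Gaifman

namespace Gaifman

section MainDefs

open FirstOrder.Language

variable (L : FirstOrder.Language.{u, u}) [L.IsRelational] [Finite (Σ n, L.Relations n)]

/-- The basic local sentence asserting `Q.card` pairwise `2 * rho`-separated points, each
realizing one of the patterns in `Q`. -/
noncomputable def leafB (k rr lam : ℕ) (ψ : Fin k → L.Formula (Fin 1))
    (hψ : ∀ i, IsLocal rr (ψ i)) (t : ℕ) (Q : Finset (Finset (Fin k))) (l : ℕ) :
    BasicLocal L :=
  ⟨Q.card, rho rr lam t l,
   fsup L Q (fun P => patF L k rr (DD rr lam t) ψ P),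
   isLocal_iSup _ _ _ (fun P _ => isLocal_patF hψ P (loc_le_rho rr lam t l))⟩

variable {L}

lemma holds_leafB {k rr lam : ℕ} {ψ : Fin k → L.Formula (Fin 1)}
    {hψ : ∀ i, IsLocal rr (ψ i)} {t : ℕ} {Q : Finset (Finset (Fin k))} {l : ℕ}
    (M : Type u) [L.Structure M] :
    (leafB L k rr lam ψ hψ t Q l).Holds M ↔
      ∃ b : Fin Q.card → M,
        (∀ m m', m ≠ m' → ¬ CloseLE L M (2 * rho rr lam t l) (b m) (b m')) ∧
        ∀ m, ∃ P ∈ Q, PatSem L k rr (DD rr lam t) ψ P M (b m) := by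
  constructor
  · rintro ⟨b, hbfar, hbre⟩
    refine ⟨b, fun m m' hne => hbfar m m' hne, fun m => ?_⟩
    have h2 : Formula.Realize
        (fsup L Q (fun P => patF L k rr (DD rr lam t) ψ P))
        (fun _ : Fin 1 => b m) := hbre m
    rw [realize_iSup_formula] at h2
    obtain ⟨P, hP, hreal⟩ := h2
    rw [realize_patF] at hreal
    exact ⟨P, hP, hreal⟩
  · rintro ⟨b, hbfar, hbre⟩
    refine ⟨b, fun m m' hne => hbfar m m' hne, fun m => ?_⟩
    show Formula.Realize
        (fsup L Q (fun P => patF L k rr (DD rr lam t) ψ P))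
        (fun _ : Fin 1 => b m)
    rw [realize_iSup_formula]
    obtain ⟨P, hP, hreal⟩ := hbre m
    refine ⟨P, hP, ?_⟩
    rw [realize_patF]
    exact hreal

variable (L)

/-- The positive Boolean combination of basic local sentences equivalent to a given
asymmetric basic local sentence (with `k ≥ 1` variables). -/
noncomputable def thePos (k rr : ℕ) (ψ : Fin k → L.Formula (Fin 1))
    (hψ : ∀ i, IsLocal rr (ψ i)) : PosBool (BasicLocal L) :=
  listOr (PosBool.base (bfalse L))
    (((Finset.univ : Finset ((Fin k → Fin k) × Fin (k + 1))).toList).map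
      (fun ct => listAnd (PosBool.base (btrue L))
        (((((labelParts ct.1).powerset.filter (fun Q => Q.Nonempty)) ×ˢ
            Finset.range (3 * k * k + 2 * k + 1 + 1)).toList).map
          (fun Ql => PosBool.base
            (leafB L k rr (3 * k * k + 2 * k + 1) ψ hψ ct.2.1 Ql.1 Ql.2)))))

end MainDefs

end Gaifman

open Gaifman

/-- **From asymmetric basic local to basic local.** Every asymmetric basic local sentence is
equivalent over the class of all structures to a positive Boolean combination (conjunctions
and disjunctions only) of basic local sentences. -/
theorem asym_to_basic (L : FirstOrder.Language.{u, u}) [L.IsRelational]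
    [Finite (Σ n, L.Relations n)] (d : AsymBasicLocal L) :
    ∃ p : PosBool (BasicLocal L),
      ∀ (M : Type u) [L.Structure M], (d.Holds M ↔ p.Eval fun b => b.Holds M) := by
  classical
  obtain ⟨k, rr, ψ, hψ⟩ := d
  rcases Nat.eq_zero_or_pos k with rfl | hk
  · -- trivial case: no variables
    refine ⟨PosBool.base (btrue L), fun M _ => ?_⟩
    constructor
    · intro _
      exact holds_btrue M
    · intro _
      exact ⟨fun i => i.elim0, fun i => i.elim0, fun i => i.elim0⟩
  -- main case
  set Λ : ℕ := 3 * k * k + 2 * k + 1 with hΛdef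
  refine ⟨thePos L k rr ψ hψ, fun M _ => ?_⟩
  rw [thePos, eval_listOr]
  constructor
  · -- from the asymmetric sentence to the positive combination
    rintro ⟨a, hfar, hre⟩
    obtain ⟨t, S, f, htS, hSne, hfmem, hffix, hfclose, hfsep⟩ :=
      net (L := L) (M := M) hk a (mu rr Λ) (DD rr Λ) rfl (fun t => rfl)
    have hScard : 1 ≤ S.card := Finset.card_pos.2 hSne
    refine Or.inl ⟨_, List.mem_map.2 ⟨(f, ⟨t, by omega⟩),
      Finset.mem_toList.2 (Finset.mem_univ _), rfl⟩, ?_⟩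
    rw [eval_listAnd]
    refine ⟨?_, holds_btrue M⟩
    rintro q hq
    obtain ⟨⟨Q, l⟩, hmem, rfl⟩ := List.mem_map.1 hq
    rw [Finset.mem_toList, Finset.mem_product] at hmem
    obtain ⟨hQ, hl⟩ := hmem
    rw [Finset.mem_filter, Finset.mem_powerset] at hQ
    obtain ⟨hQsub, hQne⟩ := hQ
    rw [Finset.mem_range] at hl
    show (leafB L k rr Λ ψ hψ t Q l).Holds M
    rw [holds_leafB]
    -- representatives of parts
    have hrep : ∀ P : Finset (Fin k), ∃ sP : Fin k, P ∈ labelParts f →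
        sP ∈ S ∧ P = Finset.univ.filter (fun j => f j = sP) := by
      intro P
      by_cases hP : P ∈ labelParts f
      · obtain ⟨iP, -, hPe⟩ := Finset.mem_image.1 hP
        exact ⟨f iP, fun _ => ⟨hfmem iP, hPe.symm⟩⟩
      · exact ⟨⟨0, hk⟩, fun h => absurd h hP⟩
    choose rep hrep using hrep
    refine ⟨fun m => a (rep (Q.equivFin.symm m).1), ?_, ?_⟩
    · -- separation of the representatives
      intro m m' hne
      have hPQ := (Q.equivFin.symm m).2
      have hPQ' := (Q.equivFin.symm m').2
      have hP := hrep _ (hQsub hPQ)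
      have hP' := hrep _ (hQsub hPQ')
      have hPP' : (Q.equivFin.symm m).1 ≠ (Q.equivFin.symm m').1 := by
        intro h
        exact hne (Q.equivFin.symm.injective (Subtype.ext h))
      have hrepne : rep (Q.equivFin.symm m).1 ≠ rep (Q.equivFin.symm m').1 := by
        intro h
        apply hPP'
        rw [hP.2, hP'.2, h]
      intro hcl
      exact hfsep _ hP.1 _ hP'.1 hrepne
        (closeLE_mono (two_rho_le_mu (by omega)) hcl)
    · -- each representative carries its pattern
      intro m
      have hPQ := (Q.equivFin.symm m).2
      have hP := hrep _ (hQsub hPQ)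
      refine ⟨(Q.equivFin.symm m).1, hPQ, a, ?_⟩
      intro i hi
      have hfi : f i = rep (Q.equivFin.symm m).1 := by
        have := hi
        rw [hP.2, Finset.mem_filter] at this
        exact this.2
      refine ⟨?_, ?_, hre i⟩
      · beta_reduce
        rw [← hfi]
        exact hfclose i
      · intro j hj hne
        exact hfar i j (Ne.symm hne)
  · -- from the positive combination to the asymmetric sentence
    rintro (⟨q, hq, he⟩ | hfalse)
    swap
    · exact absurd hfalse (not_holds_bfalse M)
    obtain ⟨⟨c, tf⟩, -, rfl⟩ := List.mem_map.1 hq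
    rw [eval_listAnd] at he
    obtain ⟨he1, -⟩ := he
    set t : ℕ := tf.1 with htdef
    have hconj : ∀ Q, Q ⊆ labelParts c → Q.Nonempty → ∀ l, l ≤ Λ →
        (leafB L k rr Λ ψ hψ t Q l).Holds M := by
      intro Q hsub hne l hl
      exact he1 (PosBool.base (leafB L k rr Λ ψ hψ t Q l))
        (List.mem_map.2 ⟨(Q, l), Finset.mem_toList.2 (Finset.mem_product.2
          ⟨Finset.mem_filter.2 ⟨Finset.mem_powerset.2 hsub, hne⟩,
           Finset.mem_range.2 (by omega)⟩), rfl⟩)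
    set F : Finset (Fin k) → Set M :=
      fun P => {x | PatSem L k rr (DD rr Λ t) ψ P M x} with hF
    have htrans : Trans L M F (labelParts c) (2 * rho rr Λ t 0) := by
      refine trans_of_counts F (labelParts c) (2 * rho rr Λ t 0) Λ
        ⟨_, mem_labelParts_self c ⟨0, hk⟩⟩ ?_ ?_
      · have h1 := two_gauge_le (card_labelParts_le c)
        calc 2 * (gauge (labelParts c).card * (2 * rho rr Λ t 0))
            = (2 * gauge (labelParts c).card) * (2 * rho rr Λ t 0) := by ring
          _ ≤ 3 ^ Λ * (2 * rho rr Λ t 0) := Nat.mul_le_mul_right _ h1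
      · intro 𝒮 h𝒮 h𝒮ne l hl
        obtain ⟨b, hbfar, hbre⟩ := (holds_leafB M).1 (hconj 𝒮 h𝒮 h𝒮ne l hl)
        refine ⟨b, fun m => ?_, fun m m' hne => ?_⟩
        · obtain ⟨P, hP, hpat⟩ := hbre m
          exact ⟨P, hP, hpat⟩
        · rw [scale_eq]
          exact hbfar m m' hne
    obtain ⟨z, hz1, hz2⟩ := htrans
    -- unpack the patterns
    have hY : ∀ P : Finset (Fin k), ∃ y : Fin k → M, P ∈ labelParts c →
        ∀ i ∈ P, CloseLE L M (DD rr Λ t) (z P) (y i) ∧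
          (∀ j ∈ P, j ≠ i → ¬ CloseLE L M (2 * rr) (y i) (y j)) ∧
          (ψ i).Realize (fun _ => y i) := by
      intro P
      by_cases hP : P ∈ labelParts c
      · obtain ⟨y, hy⟩ := hz1 P hP
        exact ⟨y, fun _ => hy⟩
      · exact ⟨fun _ => z P, fun h => absurd h hP⟩
    choose Y hY using hY
    have hptmem : ∀ i : Fin k, Finset.univ.filter (fun j => c j = c i) ∈ labelParts c :=
      fun i => mem_labelParts_self c i
    have hiipt : ∀ i : Fin k, i ∈ Finset.univ.filter (fun j => c j = c i) :=
      fun i => Finset.mem_filter.2 ⟨Finset.mem_univ i, rfl⟩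
    refine ⟨fun i => Y (Finset.univ.filter (fun j => c j = c i)) i, ?_, ?_⟩
    · -- the witnesses are pairwise far apart
      intro i j hne
      beta_reduce
      by_cases hc : c i = c j
      · have hpt : Finset.univ.filter (fun j' => c j' = c j)
            = Finset.univ.filter (fun j' => c j' = c i) := by
          ext x
          simp only [Finset.mem_filter, hc]
        have hji : j ∈ Finset.univ.filter (fun j' => c j' = c i) := by
          rw [← hpt]
          exact hiipt j
        have := (hY _ (hptmem i) i (hiipt i)).2.1 j hji (Ne.symm hne)
        rwa [hpt]
      · have hptne : Finset.univ.filter (fun j' => c j' = c i)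
            ≠ Finset.univ.filter (fun j' => c j' = c j) := by
          intro h
          have := hiipt i
          rw [h, Finset.mem_filter] at this
          exact hc this.2
        intro hcl
        have c1 := (hY _ (hptmem i) i (hiipt i)).1
        have c2 := (hY _ (hptmem j) j (hiipt j)).1
        have c3 : CloseLE L M (DD rr Λ t + (2 * rr + DD rr Λ t))
            (z (Finset.univ.filter (fun j' => c j' = c i)))
            (z (Finset.univ.filter (fun j' => c j' = c j))) :=
          closeLE_trans c1 (closeLE_trans hcl (closeLE_symm c2))
        refine hz2 _ (hptmem i) _ (hptmem j) hptne (closeLE_mono ?_ c3)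
        rw [rho_zero]
        omega
    · -- the witnesses realize their formulas
      intro i
      exact (hY _ (hptmem i) i (hiipt i)).2.2
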